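/- Under the standing assumptions and Assumption 2, suppose φ is σ-strongly convex with respect to a norm ‖·‖. Let (x_{k+1}, x_{k+1}*) be obtained from (x_k, x_k*) by one step with index i_k (with f_{i_k}(x_k) ≠ 0, ∇f_{i_k}(x_k) ≠ 0) using either the exact Bregman-projection step size t_{k,φ} or the relaxed step size t_{k,σ} = σ f_{i_k}(x_k)/‖∇f_{i_k}(x_k)‖_*². Then for every solution x̂ ∈ S: D_φ^{x_{k+1}*}(x_{k+1}, x̂) ≤ D_φ^{x_k*}(x_k, x̂) − (σ/2) · f_{i_k}(x_k)² / ‖∇f_{i_k}(x_k)‖_*². -/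

import Mathlib

open Set Filter Topology MeasureTheory ProbabilityTheory

noncomputable section

abbrev Euc (d : ℕ) := EuclideanSpace ℝ (Fin d)

/-- Real inner product on `ℝ^d`. -/
def rinn {d : ℕ} (x y : Euc d) : ℝ := inner ℝ x y

/-- Effective domain of an extended-real-valued function. -/
def edom {d : ℕ} (φ : Euc d → EReal) : Set (Euc d) := {x | φ x ≠ ⊤}

/-- Convex subdifferential. -/
def subdiff {d : ℕ} (φ : Euc d → EReal) (x : Euc d) : Set (Euc d) :=
  {u | φ x ≠ ⊤ ∧ ∀ y : Euc d, φ x + ((rinn u (y - x) : ℝ) : EReal) ≤ φ y}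

/-- Domain of the subdifferential. -/
def ddom {d : ℕ} (φ : Euc d → EReal) : Set (Euc d) := {x | (subdiff φ x).Nonempty}

/-- Bregman distance `D_φ^{u}(x,y) = φ(y) - φ(x) - ⟨u, y - x⟩`. -/
def breg {d : ℕ} (φ : Euc d → EReal) (u x y : Euc d) : EReal :=
  φ y - φ x - ((rinn u (y - x) : ℝ) : EReal)

/-- Fenchel conjugate (extended-real-valued). -/
def econj {d : ℕ} (φ : Euc d → EReal) (u : Euc d) : EReal :=
  ⨆ x : Euc d, ((rinn u x : ℝ) : EReal) - φ x

/-- Real-valued Fenchel conjugate (under the standing assumptions `econj` is finite). -/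
def rconj {d : ℕ} (φ : Euc d → EReal) (u : Euc d) : ℝ := (econj φ u).toReal

/-- Gradient `∇φ*` of the conjugate. -/
def gradconj {d : ℕ} (φ : Euc d → EReal) (u : Euc d) : Euc d := gradient (rconj φ) u

def ConvexE {d : ℕ} (φ : Euc d → EReal) : Prop :=
  ∀ x y : Euc d, ∀ t : ℝ, 0 < t → t < 1 →
    φ (t • x + (1 - t) • y) ≤ (t : EReal) * φ x + ((1 - t : ℝ) : EReal) * φ y

def StrictConvexOnE {d : ℕ} (φ : Euc d → EReal) (s : Set (Euc d)) : Prop :=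
  ∀ x ∈ s, ∀ y ∈ s, x ≠ y → ∀ t : ℝ, 0 < t → t < 1 →
    φ (t • x + (1 - t) • y) < (t : EReal) * φ x + ((1 - t : ℝ) : EReal) * φ y

def ProperE {d : ℕ} (φ : Euc d → EReal) : Prop :=
  (∃ x, φ x ≠ ⊤) ∧ ∀ x, φ x ≠ ⊥

/-- `φ(x)/‖x‖ → ∞` as `‖x‖ → ∞`. -/
def Supercoercive {d : ℕ} (φ : Euc d → EReal) : Prop :=
  ∀ M : ℝ, ∃ R : ℝ, ∀ x : Euc d, R ≤ ‖x‖ → ((M * ‖x‖ : ℝ) : EReal) ≤ φ x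

/-- Essential strict convexity: strict convexity on the relative interior of the domain. -/
def EssStrictConvexE {d : ℕ} (φ : Euc d → EReal) : Prop :=
  StrictConvexOnE φ (intrinsicInterior ℝ (edom φ))

/-- Standing assumptions on the distance generating function `φ` and constraint set `C`. -/
structure PhiAssump {d : ℕ} (φ : Euc d → EReal) (C : Set (Euc d)) : Prop where
  Cne : C.Nonempty
  Cconv : Convex ℝ C
  Ccl : IsClosed C
  proper : ProperE φ
  conv : ConvexE φ
  lsc : LowerSemicontinuous φ
  coercive : Supercoercive φ
  essstrict : EssStrictConvexE φ
  domC : closure (ddom φ) = C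
  ri_eq : ddom φ = intrinsicInterior ℝ (edom φ)

/-- Standing assumption (iv): Bregman distances tend to zero along convergent sequences. -/
def BregCont {d : ℕ} (φ : Euc d → EReal) : Prop :=
  ∀ x ∈ edom φ, ∀ xk : ℕ → Euc d, ∀ uk : ℕ → Euc d,
    (∀ k, uk k ∈ subdiff φ (xk k)) → Tendsto xk atTop (𝓝 x) →
    Tendsto (fun k => breg φ (uk k) (xk k) x) atTop (𝓝 (0 : EReal))

/-- `f` is continuously differentiable on `Dset ⊇ C`, with gradients `f'`. -/
structure FAssump {d n : ℕ} (f : Fin n → Euc d → ℝ) (f' : Fin n → Euc d → Euc d)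
    (Dset C : Set (Euc d)) : Prop where
  CsubD : C ⊆ Dset
  grad : ∀ i, ∀ x ∈ Dset, HasGradientAt (f i) (f' i x) x
  cont : ∀ i, ContinuousOn (f' i) Dset

/-- Solution set `S = C ∩ f⁻¹(0)`. -/
def solSet {d n : ℕ} (f : Fin n → Euc d → ℝ) (C : Set (Euc d)) : Set (Euc d) :=
  {x ∈ C | ∀ i, f i x = 0}

/-- `N` is a norm on `ℝ^d`. -/
def IsANorm {d : ℕ} (N : Euc d → ℝ) : Prop :=
  (∀ x, N x = 0 ↔ x = 0) ∧ (∀ (c : ℝ) (x : Euc d), N (c • x) = |c| * N x) ∧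
    ∀ x y : Euc d, N (x + y) ≤ N x + N y

/-- Dual norm of `N`. -/
def dualN {d : ℕ} (N : Euc d → ℝ) (u : Euc d) : ℝ :=
  sSup {r : ℝ | ∃ y : Euc d, N y ≤ 1 ∧ r = (rinn u y)}

/-- `φ` is `σ`-strongly convex w.r.t. the norm `N`. -/
def StronglyConvexWrt {d : ℕ} (φ : Euc d → EReal) (σ : ℝ) (N : Euc d → ℝ) : Prop :=
  ∀ x ∈ ddom φ, ∀ y ∈ ddom φ, ∀ u ∈ subdiff φ x,
    ((σ / 2 * (N (x - y)) ^ 2 : ℝ) : EReal) ≤ breg φ u x y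

/-- `φ` is `M`-smooth w.r.t. the norm `N`: finite everywhere (subdifferentiable everywhere)
with the quadratic upper bound. -/
def SmoothWrt {d : ℕ} (φ : Euc d → EReal) (M : ℝ) (N : Euc d → ℝ) : Prop :=
  (∀ x : Euc d, (subdiff φ x).Nonempty) ∧
    ∀ x y : Euc d, ∀ u ∈ subdiff φ x,
      breg φ u x y ≤ ((M / 2 * (N (x - y)) ^ 2 : ℝ) : EReal)

/-- `g` (with gradient `g'`) is star-convex. -/
def StarConvexWith {d : ℕ} (g : Euc d → ℝ) (g' : Euc d → Euc d) : Prop :=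
  (∃ z : Euc d, ∀ y, g z ≤ g y) ∧
    ∀ x z : Euc d, (∀ y, g z ≤ g y) → g x + rinn (g' x) (z - x) ≤ g z

/-- `g` (with gradient `g'`) is strictly star-convex. -/
def StrictStarConvexWith {d : ℕ} (g : Euc d → ℝ) (g' : Euc d → Euc d) : Prop :=
  (∃ z : Euc d, ∀ y, g z ≤ g y) ∧
    ∀ x z : Euc d, (∀ y, g z ≤ g y) → x ≠ z → g x + rinn (g' x) (z - x) < g z

/-- `g` is `μ`-strongly star-convex relative to `φ`. -/
def StronglyStarConvexRel {d : ℕ} (g : Euc d → ℝ) (g' : Euc d → Euc d) (μ : ℝ)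
    (φ : Euc d → EReal) : Prop :=
  (∃ z : Euc d, ∀ y, g z ≤ g y) ∧
    ∀ x : Euc d, ∀ u ∈ subdiff φ x, ∀ z : Euc d, (∀ y, g z ≤ g y) →
      ((g x + rinn (g' x) (z - x) : ℝ) : EReal) + (μ : EReal) * breg φ u x z ≤ (g z : EReal)

def IsAffineF {d : ℕ} (g : Euc d → ℝ) : Prop :=
  ∃ (a : Euc d) (b : ℝ), ∀ x, g x = (rinn a x) + b

/-- Assumption 2: each component is either nonnegative star-convex with a zero in `dom ∂φ`,
nonnegative strictly star-convex, or affine. -/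
def Assump2 {d n : ℕ} (φ : Euc d → EReal) (f : Fin n → Euc d → ℝ)
    (f' : Fin n → Euc d → Euc d) : Prop :=
  ∀ i : Fin n,
    ((∀ x, 0 ≤ f i x) ∧ StarConvexWith (f i) (f' i) ∧ ∃ z ∈ ddom φ, f i z = 0) ∨
    ((∀ x, 0 ≤ f i x) ∧ StrictStarConvexWith (f i) (f' i)) ∨
    IsAffineF (f i)

/-- `g` is `L`-smooth w.r.t. the norm `N` (quadratic upper bound). -/
def LSmoothWrt {d : ℕ} (g : Euc d → ℝ) (g' : Euc d → Euc d) (L : ℝ) (N : Euc d → ℝ) : Prop :=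
  ∀ x y : Euc d, g y ≤ g x + rinn (g' x) (y - x) + L / 2 * (N (x - y)) ^ 2

/-- Hyperplane given by the linearization of `f i` at `x`. -/
def linHyp {d n : ℕ} (f : Fin n → Euc d → ℝ) (f' : Fin n → Euc d → Euc d)
    (i : Fin n) (x : Euc d) : Set (Euc d) :=
  {y | f i x + rinn (f' i x) (y - x) = 0}

/-- Objective of the one-dimensional dual problem defining the exact NBK step size. -/
def lineObj {d n : ℕ} (φ : Euc d → EReal) (f : Fin n → Euc d → ℝ)
    (f' : Fin n → Euc d → Euc d) (i : Fin n) (x u : Euc d) (t : ℝ) : ℝ :=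
  rconj φ (u - t • f' i x) + t * (rinn (f' i x) x - f i x)

/-- Local tangential cone condition with constant `η` on `U`. -/
def TCCOn {d : ℕ} (g : Euc d → ℝ) (g' : Euc d → Euc d) (η : ℝ) (U : Set (Euc d)) : Prop :=
  ∀ x ∈ U, ∀ y ∈ U, |g x + rinn (g' x) (y - x) - g y| ≤ η * |g x - g y|

/-- The set `B_{r,φ}(z)`. -/
def BregBall {d : ℕ} (φ : Euc d → EReal) (C : Set (Euc d)) (r : ℝ) (z : Euc d) :
    Set (Euc d) :=
  {x ∈ C | ∀ u ∈ subdiff φ x, breg φ u x z ≤ (r : EReal)}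

end


noncomputable section Statement10Helpers
open Filter

section NormLemmas
variable {d : ℕ} {N : Euc d → ℝ} (hN : IsANorm N)
include hN

lemma N_zero : N 0 = 0 := (hN.1 0).2 rfl

lemma N_neg (x : Euc d) : N (-x) = N x := by
  have := hN.2.1 (-1) x; simpa using this

lemma N_nonneg (x : Euc d) : 0 ≤ N x := by
  have h := hN.2.2 x (-x)
  simp [N_neg hN, N_zero hN] at h
  linarith

lemma N_sub_comm (x y : Euc d) : N (x - y) = N (y - x) := by
  rw [← N_neg hN (x - y)]; congr 1; abel

omit hN in
lemma abs_apply_le_norm (x : Euc d) (i : Fin d) : |x i| ≤ ‖x‖ := by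
  have h1 : |x i| ^ 2 ≤ ∑ j : Fin d, ‖x j‖ ^ 2 := by
    have := Finset.single_le_sum (f := fun j : Fin d => ‖x j‖ ^ 2)
      (fun j _ => by positivity) (Finset.mem_univ i)
    simpa [Real.norm_eq_abs, sq_abs] using this
  have h2 : ‖x‖ = Real.sqrt (∑ j : Fin d, ‖x j‖ ^ 2) := by
    rw [EuclideanSpace.norm_eq]
  rw [h2]
  calc |x i| = Real.sqrt (|x i| ^ 2) := by rw [Real.sqrt_sq (abs_nonneg _)]
  _ ≤ _ := Real.sqrt_le_sqrt h1

lemma N_le_const : ∃ c : ℝ, 0 < c ∧ ∀ x : Euc d, N x ≤ c * ‖x‖ := by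
  classical
  set c₀ : ℝ := ∑ i : Fin d, N (EuclideanSpace.single i (1:ℝ)) with hc₀
  have hc₀0 : 0 ≤ c₀ := Finset.sum_nonneg fun i _ => N_nonneg hN _
  refine ⟨c₀ + 1, by positivity, fun x => ?_⟩
  have hx : x = ∑ i : Fin d, (x i) • EuclideanSpace.single i (1:ℝ) := by
    ext j
    rw [WithLp.ofLp_sum, Fintype.sum_apply]
    simp [EuclideanSpace.single_apply]
  have htri : ∀ (s : Finset (Fin d)), N (∑ i ∈ s, (x i) • EuclideanSpace.single i (1:ℝ))
      ≤ ∑ i ∈ s, |x i| * N (EuclideanSpace.single i (1:ℝ)) := by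
    intro s
    induction s using Finset.induction with
    | empty => simp [N_zero hN]
    | insert a s' hni ih =>
      rw [Finset.sum_insert hni, Finset.sum_insert hni]
      calc N _ ≤ N ((x a) • EuclideanSpace.single a (1:ℝ))
            + N (∑ i ∈ s', (x i) • EuclideanSpace.single i (1:ℝ)) := hN.2.2 _ _
      _ ≤ _ := by rw [hN.2.1]; exact add_le_add_right ih _
  have h1 : N x ≤ ∑ i : Fin d, |x i| * N (EuclideanSpace.single i (1:ℝ)) := by
    conv_lhs => rw [hx]
    exact htri Finset.univ
  have h2 : ∑ i : Fin d, |x i| * N (EuclideanSpace.single i (1:ℝ)) ≤ c₀ * ‖x‖ := by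
    rw [hc₀, Finset.sum_mul]
    exact Finset.sum_le_sum fun i _ => by
      rw [mul_comm (N _) ‖x‖]
      exact mul_le_mul_of_nonneg_right (abs_apply_le_norm x i) (N_nonneg hN _)
  nlinarith [norm_nonneg x]

lemma N_continuous : Continuous N := by
  obtain ⟨c, hc, hb⟩ := N_le_const hN
  rw [Metric.continuous_iff]
  intro x ε hε
  refine ⟨ε / c, by positivity, fun y hy => ?_⟩
  have h1 : N y - N x ≤ N (y - x) := by
    have := hN.2.2 (y - x) x; simpa using this
  have h2 : N x - N y ≤ N (y - x) := by
    have := hN.2.2 (x - y) y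
    rw [N_sub_comm hN x y] at this
    simpa using this
  have h3 : N (y - x) ≤ c * ‖y - x‖ := hb _
  rw [Real.dist_eq]
  rw [dist_eq_norm] at hy
  have : c * ‖y - x‖ < ε := by
    calc c * ‖y - x‖ < c * (ε / c) := by exact mul_lt_mul_of_pos_left hy hc
    _ = ε := by field_simp
  rw [abs_sub_lt_iff]
  constructor <;> linarith

lemma N_lower : ∃ m : ℝ, 0 < m ∧ ∀ x : Euc d, m * ‖x‖ ≤ N x := by
  by_cases hd : ∃ y : Euc d, y ≠ 0
  · obtain ⟨y₀, hy₀⟩ := hd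
    have hsph : (Metric.sphere (0:Euc d) 1).Nonempty :=
      ⟨‖y₀‖⁻¹ • y₀, by simp [norm_smul, norm_ne_zero_iff.2 hy₀, inv_mul_cancel₀]⟩
    obtain ⟨z, hz, hmin⟩ := (isCompact_sphere (0:Euc d) 1).exists_isMinOn hsph
      ((N_continuous hN).continuousOn)
    have hz1 : ‖z‖ = 1 := by simpa using hz
    have hzne : z ≠ 0 := by intro h; rw [h] at hz1; simp at hz1
    have hm : 0 < N z := lt_of_le_of_ne (N_nonneg hN z) (fun h => hzne ((hN.1 z).1 h.symm))
    refine ⟨N z, hm, fun x => ?_⟩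
    rcases eq_or_ne x 0 with rfl | hx
    · simp [N_zero hN]
    · have hxn : (0:ℝ) < ‖x‖ := norm_pos_iff.2 hx
      have hw : (‖x‖⁻¹ • x) ∈ Metric.sphere (0:Euc d) 1 := by
        simp [norm_smul, abs_of_pos (inv_pos.2 hxn), inv_mul_cancel₀ (ne_of_gt hxn)]
      have h1 : N z ≤ N (‖x‖⁻¹ • x) := hmin hw
      rw [hN.2.1, abs_of_pos (inv_pos.2 hxn)] at h1
      calc N z * ‖x‖ ≤ (‖x‖⁻¹ * N x) * ‖x‖ := by nlinarith
      _ = N x := by field_simp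
  · push_neg at hd
    refine ⟨1, one_pos, fun x => ?_⟩
    rw [hd x]
    simp [N_zero hN]

omit hN in
lemma rinn_le (u y : Euc d) : rinn u y ≤ ‖u‖ * ‖y‖ := real_inner_le_norm u y

lemma dual_mem_zero (u : Euc d) : (0:ℝ) ∈ {r : ℝ | ∃ y : Euc d, N y ≤ 1 ∧ r = rinn u y} :=
  ⟨0, by simp [N_zero hN, rinn, inner_zero_right]⟩

lemma dual_bddAbove (u : Euc d) : BddAbove {r : ℝ | ∃ y : Euc d, N y ≤ 1 ∧ r = rinn u y} := by
  obtain ⟨m, hm, hml⟩ := N_lower hN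
  refine ⟨‖u‖ * (1/m), fun r hr => ?_⟩
  obtain ⟨y, hy, rfl⟩ := hr
  have h1 : m * ‖y‖ ≤ 1 := le_trans (hml y) hy
  have h2 : ‖y‖ ≤ 1/m := by rw [le_div_iff₀ hm]; linarith [mul_comm m ‖y‖]
  calc rinn u y ≤ ‖u‖ * ‖y‖ := rinn_le u y
  _ ≤ ‖u‖ * (1/m) := mul_le_mul_of_nonneg_left h2 (norm_nonneg u)

lemma dualN_nonneg (u : Euc d) : 0 ≤ dualN N u :=
  le_csSup (dual_bddAbove hN u) (dual_mem_zero hN u)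

lemma dualN_le_const : ∃ cd : ℝ, 0 < cd ∧ ∀ u : Euc d, dualN N u ≤ cd * ‖u‖ := by
  obtain ⟨m, hm, hml⟩ := N_lower hN
  refine ⟨1/m, by positivity, fun u => ?_⟩
  apply csSup_le ⟨0, dual_mem_zero hN u⟩
  rintro r ⟨y, hy, rfl⟩
  have h1 : m * ‖y‖ ≤ 1 := le_trans (hml y) hy
  have h2 : ‖y‖ ≤ 1/m := by rw [le_div_iff₀ hm]; linarith [mul_comm m ‖y‖]
  calc rinn u y ≤ ‖u‖ * ‖y‖ := rinn_le u y
  _ ≤ ‖u‖ * (1/m) := mul_le_mul_of_nonneg_left h2 (norm_nonneg u)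
  _ = 1/m * ‖u‖ := mul_comm _ _

lemma rinn_le_dualN (u y : Euc d) : rinn u y ≤ dualN N u * N y := by
  rcases eq_or_ne y 0 with rfl | hy
  · rw [N_zero hN]
    have h0 : rinn u 0 = 0 := by simp [rinn, inner_zero_right]
    rw [h0, mul_zero]
  · have hNy : 0 < N y := lt_of_le_of_ne (N_nonneg hN y) (fun h => hy ((hN.1 y).1 h.symm))
    have hmem : rinn u ((N y)⁻¹ • y) ∈ {r : ℝ | ∃ z : Euc d, N z ≤ 1 ∧ r = rinn u z} := by
      refine ⟨(N y)⁻¹ • y, ?_, rfl⟩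
      rw [hN.2.1, abs_of_pos (inv_pos.2 hNy), inv_mul_cancel₀ (ne_of_gt hNy)]
    have h1 : rinn u ((N y)⁻¹ • y) ≤ dualN N u := le_csSup (dual_bddAbove hN u) hmem
    have h2 : rinn u ((N y)⁻¹ • y) = (N y)⁻¹ * rinn u y := by
      simp [rinn, inner_smul_right]
    rw [h2] at h1
    calc rinn u y = N y * ((N y)⁻¹ * rinn u y) := by field_simp
    _ ≤ N y * dualN N u := mul_le_mul_of_nonneg_left h1 (le_of_lt hNy)
    _ = dualN N u * N y := mul_comm _ _

lemma abs_rinn_le_dual (u y : Euc d) (hy : N y ≤ 1) : |rinn u y| ≤ dualN N u := by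
  rcases abs_cases (rinn u y) with ⟨h, _⟩ | ⟨h, _⟩
  · rw [h]
    exact le_csSup (dual_bddAbove hN u) ⟨y, hy, rfl⟩
  · rw [h]
    have : -rinn u y = rinn u (-y) := by simp [rinn, inner_neg_right]
    rw [this]
    exact le_csSup (dual_bddAbove hN u) ⟨-y, by rw [N_neg hN]; exact hy, rfl⟩

lemma dualN_smul (c : ℝ) (u : Euc d) : dualN N (c • u) = |c| * dualN N u := by
  rcases eq_or_ne c 0 with rfl | hc
  · simp only [zero_smul, abs_zero, zero_mul]
    apply le_antisymm
    · apply csSup_le ⟨0, dual_mem_zero hN 0⟩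
      rintro r ⟨y, hy, rfl⟩
      simp [rinn, inner_zero_left]
    · exact dualN_nonneg hN 0
  · have habs : 0 < |c| := abs_pos.2 hc
    apply le_antisymm
    · apply csSup_le ⟨0, dual_mem_zero hN _⟩
      rintro r ⟨y, hy, rfl⟩
      have h1 : rinn (c • u) y = c * rinn u y := real_inner_smul_left u y c
      calc rinn (c • u) y ≤ |rinn (c • u) y| := le_abs_self _
      _ = |c| * |rinn u y| := by rw [h1, abs_mul]
      _ ≤ |c| * dualN N u := mul_le_mul_of_nonneg_left (abs_rinn_le_dual hN u y hy) (le_of_lt habs)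
    · rw [← le_div_iff₀' habs]
      apply csSup_le ⟨0, dual_mem_zero hN u⟩
      rintro r ⟨y, hy, rfl⟩
      rw [le_div_iff₀' habs]
      have hsgn : |c| * rinn u y = rinn (c • u) ((|c| / c) • y) := by
        simp only [rinn, real_inner_smul_left, real_inner_smul_right]
        field_simp
      rw [hsgn]
      apply le_csSup (dual_bddAbove hN _)
      refine ⟨(|c| / c) • y, ?_, rfl⟩
      have : |(|c| / c)| = 1 := by
        rw [abs_div, abs_abs, div_self (ne_of_gt habs)]
      rw [hN.2.1, this, one_mul]
      exact hy

lemma dualN_pos (u : Euc d) (hu : u ≠ 0) : 0 < dualN N u := by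
  have hNu : 0 < N u := lt_of_le_of_ne (N_nonneg hN u) (fun h => hu ((hN.1 u).1 h.symm))
  have h1 : rinn u u ≤ dualN N u * N u := rinn_le_dualN hN u u
  have h2 : 0 < rinn u u := by
    have : rinn u u = ‖u‖ * ‖u‖ := real_inner_self_eq_norm_mul_norm u
    rw [this]
    have := norm_pos_iff.2 hu
    positivity
  nlinarith

end NormLemmas

section ConjLemmas
variable {d : ℕ} {φ : Euc d → EReal}
/-- minimum of an lsc EReal function on a compact set is attained -/
lemma lsc_isMinOn {g : Euc d → EReal} (hg : LowerSemicontinuous g) {K : Set (Euc d)}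
    (hK : IsCompact K) (hne : K.Nonempty) : ∃ x ∈ K, ∀ y ∈ K, g x ≤ g y := by
  classical
  set a := sInf (g '' K) with ha
  rcases eq_or_ne a ⊤ with htop | hlt
  · obtain ⟨x, hx⟩ := hne
    refine ⟨x, hx, fun y hy => ?_⟩
    have : g y = ⊤ := sInf_eq_top.1 htop (g y) ⟨y, hy, rfl⟩
    rw [this]; exact le_top
  · have hlt' : a < ⊤ := lt_of_le_of_ne le_top hlt
    haveI : Nonempty {c : EReal // a < c} := ⟨⟨⊤, hlt'⟩⟩
    set t : {c : EReal // a < c} → Set (Euc d) := fun c => {y ∈ K | g y ≤ c.1} with htdef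
    have hcl : ∀ c : {c : EReal // a < c}, IsClosed (t c) := by
      intro c
      have : t c = K ∩ g ⁻¹' (Set.Iic c.1) := by
        ext y; simp [htdef, Set.mem_setOf_eq, and_comm]
      rw [this]
      exact hK.isClosed.inter (hg.isClosed_preimage c.1)
    have hcomp : ∀ c, IsCompact (t c) := fun c =>
      hK.of_isClosed_subset (hcl c) (fun y hy => hy.1)
    have hnon : ∀ c, (t c).Nonempty := by
      intro c
      have : sInf (g '' K) < c.1 := ha ▸ c.2
      obtain ⟨b, ⟨y, hy, rfl⟩, hb⟩ := sInf_lt_iff.1 this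
      exact ⟨y, hy, le_of_lt hb⟩
    have hdir : Directed (fun x1 x2 => x1 ⊇ x2) t := by
      intro c₁ c₂
      refine ⟨⟨min c₁.1 c₂.1, lt_min c₁.2 c₂.2⟩, ?_, ?_⟩
      · intro y hy; exact ⟨hy.1, le_trans hy.2 (min_le_left _ _)⟩
      · intro y hy; exact ⟨hy.1, le_trans hy.2 (min_le_right _ _)⟩
    obtain ⟨x, hx⟩ := IsCompact.nonempty_iInter_of_directed_nonempty_isCompact_isClosed
      t hdir hnon hcomp hcl
    have hxK : x ∈ K := by
      have := Set.mem_iInter.1 hx ⟨⊤, hlt'⟩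
      exact this.1
    refine ⟨x, hxK, fun y hy => ?_⟩
    have hgx : g x ≤ a := by
      apply le_of_forall_gt_imp_ge_of_dense
      intro c hc
      exact (Set.mem_iInter.1 hx ⟨c, hc⟩).2
    exact le_trans hgx (sInf_le ⟨y, hy, rfl⟩)

/-- lower semicontinuity of `φ - ⟨v, ·⟩` -/
lemma lsc_sub_linear (hl : LowerSemicontinuous φ) (hb : ∀ y, φ y ≠ ⊥) (v : Euc d) :
    LowerSemicontinuous (fun y => φ y - ((rinn v y : ℝ) : EReal)) := by
  intro x c hc
  induction c with
  | bot =>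
    filter_upwards with y
    have : φ y - ((rinn v y : ℝ) : EReal) ≠ ⊥ := by
      intro h
      rcases eq_or_ne (φ y) ⊤ with h'' | h''
      · rw [h'', EReal.top_sub_coe] at h
        exact top_ne_bot h
      · obtain ⟨r, hr⟩ : ∃ r : ℝ, φ y = (r : EReal) :=
          ⟨(φ y).toReal, (EReal.coe_toReal h'' (hb y)).symm⟩
        rw [hr, ← EReal.coe_sub] at h
        exact EReal.coe_ne_bot _ h
    exact bot_lt_iff_ne_bot.2 this
  | top => exact absurd hc (not_top_lt)
  | coe c' =>
    set s := rinn v x with hs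
    have hcx : ((c' + s : ℝ) : EReal) < φ x := by
      have h0 := (EReal.lt_sub_iff_add_lt (b := ((s:ℝ):EReal)) (c := ((c':ℝ):EReal))
        (Or.inl (EReal.coe_ne_bot s)) (Or.inl (EReal.coe_ne_top s))).1 hc
      rw [EReal.coe_add]
      exact h0
    obtain ⟨ε, hε, hεx⟩ : ∃ ε : ℝ, 0 < ε ∧ ((c' + s + ε : ℝ) : EReal) < φ x := by
      rcases eq_or_ne (φ x) ⊤ with h' | h'
      · exact ⟨1, one_pos, h' ▸ EReal.coe_lt_top _⟩
      · obtain ⟨p, hp⟩ : ∃ p : ℝ, φ x = (p : EReal) := ⟨(φ x).toReal, (EReal.coe_toReal h' (hb x)).symm⟩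
        rw [hp] at hcx ⊢
        have hcs : c' + s < p := EReal.coe_lt_coe_iff.1 hcx
        exact ⟨(p - (c' + s)) / 2, by linarith, EReal.coe_lt_coe_iff.2 (by linarith)⟩
    have h1 : ∀ᶠ y in nhds x, ((c' + s + ε : ℝ) : EReal) < φ y := hl x _ hεx
    have h2 : ∀ᶠ y in nhds x, rinn v y < s + ε := by
      have hcont : Continuous (fun y : Euc d => rinn v y) := by
        simp only [rinn]
        exact continuous_const.inner continuous_id
      have : IsOpen {y : Euc d | rinn v y < s + ε} := isOpen_lt hcont continuous_const
      exact this.eventually_mem (by simp [hs, Set.mem_setOf_eq]; linarith)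
    filter_upwards [h1, h2] with y hy1 hy2
    calc ((c' : ℝ) : EReal) = ((c' + s + ε : ℝ) : EReal) - ((s + ε : ℝ) : EReal) := by
          rw [← EReal.coe_sub]; norm_num
    _ < φ y - ((rinn v y : ℝ) : EReal) := by
        apply EReal.sub_lt_sub_of_lt_of_le hy1 (le_of_lt (EReal.coe_lt_coe_iff.2 hy2))
          (EReal.coe_ne_bot _) (EReal.coe_ne_top _)

-- rinn simple identities
lemma rinn_sub_left (u v y : Euc d) : rinn (u - v) y = rinn u y - rinn v y :=
  inner_sub_left u v y
lemma rinn_sub_right (u v y : Euc d) : rinn u (v - y) = rinn u v - rinn u y :=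
  inner_sub_right u v y
lemma rinn_smul_left (c : ℝ) (u y : Euc d) : rinn (c • u) y = c * rinn u y :=
  real_inner_smul_left u y c
lemma rinn_comm (u y : Euc d) : rinn u y = rinn y u := (real_inner_comm u y).symm

/-- packaged maximizer for the conjugate -/
lemma conj_pack (hp : ProperE φ) (hl : LowerSemicontinuous φ) (hc : Supercoercive φ)
    (v : Euc d) : ∃ x : Euc d, ∃ px : ℝ, φ x = (px : EReal) ∧ v ∈ subdiff φ x ∧
      econj φ v = ((rinn v x - px : ℝ) : EReal) := by
  -- step 1: find minimizer of g = φ - ⟨v,·⟩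
  set g : Euc d → EReal := fun y => φ y - ((rinn v y : ℝ) : EReal) with hgdef
  have hglsc : LowerSemicontinuous g := lsc_sub_linear hl hp.2 v
  obtain ⟨x₀, hx₀⟩ := hp.1
  obtain ⟨p₀, hp₀⟩ : ∃ p₀ : ℝ, φ x₀ = (p₀ : EReal) :=
    ⟨(φ x₀).toReal, (EReal.coe_toReal hx₀ (hp.2 x₀)).symm⟩
  set r₀ : ℝ := p₀ - rinn v x₀ with hr₀
  have hgx₀ : g x₀ = (r₀ : EReal) := by
    rw [hgdef]; simp only [hp₀, hr₀]; rw [← EReal.coe_sub]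
  set M : ℝ := ‖v‖ + |r₀| + 1 with hM
  obtain ⟨R, hR⟩ := hc M
  set R' : ℝ := max R (max 1 ‖x₀‖) with hR'
  have hout : ∀ y : Euc d, R' < ‖y‖ → (r₀ : EReal) < g y := by
    intro y hy
    have h1 : ((M * ‖y‖ : ℝ) : EReal) ≤ φ y :=
      hR y (le_of_lt (lt_of_le_of_lt (le_max_left _ _) hy))
    have h2 : (1:ℝ) ≤ ‖y‖ := le_of_lt (lt_of_le_of_lt (le_trans (le_max_left _ _) (le_max_right _ _)) hy)
    have h3 : rinn v y ≤ ‖v‖ * ‖y‖ := real_inner_le_norm v y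
    have h4 : r₀ < M * ‖y‖ - rinn v y := by
      have : (|r₀| + 1) * ‖y‖ ≥ |r₀| + 1 := by nlinarith [abs_nonneg r₀]
      have h5 : M * ‖y‖ = ‖v‖ * ‖y‖ + (|r₀| + 1) * ‖y‖ := by rw [hM]; ring
      nlinarith [le_abs_self r₀]
    calc (r₀ : EReal) < ((M * ‖y‖ - rinn v y : ℝ) : EReal) := EReal.coe_lt_coe_iff.2 h4
    _ = ((M * ‖y‖ : ℝ) : EReal) - ((rinn v y : ℝ) : EReal) := EReal.coe_sub _ _
    _ ≤ g y := EReal.sub_le_sub h1 (le_refl _)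
  have hx₀K : x₀ ∈ Metric.closedBall (0 : Euc d) R' := by
    simp [Metric.mem_closedBall, dist_eq_norm]
    exact le_trans (le_trans (le_max_right _ _) (le_max_right _ _)) (le_refl R')
  obtain ⟨x, hxK, hxmin⟩ := lsc_isMinOn hglsc (isCompact_closedBall (0:Euc d) R')
    ⟨x₀, hx₀K⟩
  have hgmin : ∀ y : Euc d, g x ≤ g y := by
    intro y
    by_cases hyK : y ∈ Metric.closedBall (0 : Euc d) R'
    · exact hxmin y hyK
    · have hy : R' < ‖y‖ := by
        simp [Metric.mem_closedBall, dist_eq_norm] at hyK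
        linarith
      calc g x ≤ g x₀ := hxmin x₀ hx₀K
      _ = (r₀ : EReal) := hgx₀
      _ ≤ g y := le_of_lt (hout y hy)
  -- step 2: φ x is finite
  have hgxr : g x ≤ (r₀ : EReal) := hgx₀ ▸ hgmin x₀
  have hφxt : φ x ≠ ⊤ := by
    intro h
    have : g x = ⊤ := by rw [hgdef]; simp only [h]; exact EReal.top_sub_coe _
    rw [this] at hgxr
    exact absurd (lt_of_le_of_lt hgxr (EReal.coe_lt_top r₀)) (lt_irrefl ⊤)
  obtain ⟨px, hpx⟩ : ∃ px : ℝ, φ x = (px : EReal) :=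
    ⟨(φ x).toReal, (EReal.coe_toReal hφxt (hp.2 x)).symm⟩
  have hgx : g x = ((px - rinn v x : ℝ) : EReal) := by
    rw [hgdef]; simp only [hpx]; rw [← EReal.coe_sub]
  -- step 3: v ∈ subdiff φ x
  have hsub : v ∈ subdiff φ x := by
    refine ⟨hφxt, fun y => ?_⟩
    have h := hgmin y
    rw [hgx] at h
    simp only [hgdef] at h
    rcases eq_or_ne (φ y) ⊤ with h' | h'
    · rw [h']; exact le_top
    · obtain ⟨py, hpy⟩ : ∃ py : ℝ, φ y = (py : EReal) :=
        ⟨(φ y).toReal, (EReal.coe_toReal h' (hp.2 y)).symm⟩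
      rw [hpy] at h ⊢
      rw [← EReal.coe_sub, EReal.coe_le_coe_iff] at h
      rw [hpx, ← EReal.coe_add, EReal.coe_le_coe_iff]
      rw [rinn_sub_right]
      linarith
  -- step 4: conjugate value
  refine ⟨x, px, hpx, hsub, ?_⟩
  apply le_antisymm
  · apply iSup_le
    intro y
    have h := hgmin y
    rw [hgx] at h
    simp only [hgdef] at h
    rcases eq_or_ne (φ y) ⊤ with h' | h'
    · rw [h', EReal.sub_top]
      exact bot_le
    · obtain ⟨py, hpy⟩ : ∃ py : ℝ, φ y = (py : EReal) :=
        ⟨(φ y).toReal, (EReal.coe_toReal h' (hp.2 y)).symm⟩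
      rw [hpy] at h ⊢
      rw [← EReal.coe_sub, EReal.coe_le_coe_iff] at h
      rw [← EReal.coe_sub, EReal.coe_le_coe_iff]
      linarith
  · have : ((rinn v x : ℝ) : EReal) - φ x = ((rinn v x - px : ℝ) : EReal) := by
      rw [hpx, ← EReal.coe_sub]
    exact this ▸ le_iSup (fun y => ((rinn v y : ℝ) : EReal) - φ y) x

lemma econj_fin (hp : ProperE φ) (hl : LowerSemicontinuous φ) (hc : Supercoercive φ)
    (v : Euc d) : econj φ v = ((rconj φ v : ℝ) : EReal) := by
  obtain ⟨x, px, _, _, h⟩ := conj_pack hp hl hc v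
  rw [rconj, h, EReal.toReal_coe]

/-- Fenchel–Young inequality -/
lemma rconj_ge (hp : ProperE φ) (hl : LowerSemicontinuous φ) (hc : Supercoercive φ)
    (v y : Euc d) {py : ℝ} (hy : φ y = (py : EReal)) : rinn v y - py ≤ rconj φ v := by
  have h : ((rinn v y : ℝ) : EReal) - φ y ≤ econj φ v := by
    rw [econj]
    exact le_iSup (fun z => ((rinn v z : ℝ) : EReal) - φ z) y
  rw [econj_fin hp hl hc v, hy, ← EReal.coe_sub, EReal.coe_le_coe_iff] at h
  exact h

/-- Fenchel equality at a subdifferential point -/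
lemma rconj_of_subdiff (hp : ProperE φ) (hl : LowerSemicontinuous φ) (hc : Supercoercive φ)
    {x u : Euc d} {px : ℝ} (hx : φ x = (px : EReal)) (hu : u ∈ subdiff φ x) :
    rconj φ u = rinn u x - px := by
  apply le_antisymm
  · have h : econj φ u ≤ ((rinn u x - px : ℝ) : EReal) := by
      rw [econj]
      apply iSup_le
      intro y
      rcases eq_or_ne (φ y) ⊤ with h' | h'
      · rw [h', EReal.sub_top]; exact bot_le
      · obtain ⟨py, hpy⟩ : ∃ py : ℝ, φ y = (py : EReal) :=
          ⟨(φ y).toReal, (EReal.coe_toReal h' (hp.2 y)).symm⟩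
        have h2 := hu.2 y
        rw [hpy, hx, ← EReal.coe_add, EReal.coe_le_coe_iff] at h2
        rw [hpy, ← EReal.coe_sub, EReal.coe_le_coe_iff]
        rw [rinn_sub_right] at h2
        linarith
    rw [econj_fin hp hl hc u, EReal.coe_le_coe_iff] at h
    exact h
  · exact rconj_ge hp hl hc u x hx

section smooth
variable {N : Euc d → ℝ} {σ : ℝ}

lemma rconj_smooth (hp : ProperE φ) (hl : LowerSemicontinuous φ) (hc : Supercoercive φ)
    (hN : IsANorm N) (hσ : 0 < σ) (hsc : StronglyConvexWrt φ σ N)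
    {x u : Euc d} {px : ℝ} (hx : φ x = (px : EReal)) (hu : u ∈ subdiff φ x) (w : Euc d) :
    rconj φ w ≤ rconj φ u + rinn (w - u) x + (dualN N (w - u)) ^ 2 / (2 * σ) := by
  obtain ⟨xw, pw, hxw, hw, heqw⟩ := conj_pack hp hl hc w
  have hrw : rconj φ w = rinn w xw - pw := by rw [rconj, heqw, EReal.toReal_coe]
  have hru : rconj φ u = rinn u x - px := rconj_of_subdiff hp hl hc hx hu
  -- strong convexity
  have hstr := hsc x ⟨u, hu⟩ xw ⟨w, hw⟩ u hu
  have hbreg : breg φ u x xw = ((pw - px - rinn u (xw - x) : ℝ) : EReal) := by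
    rw [breg, hxw, hx, ← EReal.coe_sub, ← EReal.coe_sub]
  rw [hbreg, EReal.coe_le_coe_iff] at hstr
  have hcs : rinn (w - u) (xw - x) ≤ dualN N (w - u) * N (xw - x) := rinn_le_dualN hN _ _
  have hNc : N (x - xw) = N (xw - x) := N_sub_comm hN x xw
  rw [hNc] at hstr
  have h2σ : (0:ℝ) < 2 * σ := by positivity
  have hkey : rinn (w - u) (xw - x) - σ / 2 * (N (xw - x)) ^ 2
      ≤ (dualN N (w - u)) ^ 2 / (2 * σ) := by
    have h4 : (rinn (w - u) (xw - x) - σ / 2 * (N (xw - x)) ^ 2) * (2 * σ)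
        ≤ (dualN N (w - u)) ^ 2 := by
      nlinarith [sq_nonneg (dualN N (w - u) - σ * N (xw - x)),
        mul_le_mul_of_nonneg_right hcs (le_of_lt h2σ)]
    exact (le_div_iff₀ h2σ).mpr h4
  have e1 : rinn (w - u) (xw - x) = rinn w xw - rinn w x - rinn u xw + rinn u x := by
    rw [rinn_sub_left, rinn_sub_right, rinn_sub_right]; ring
  have e2 : rinn (w - u) x = rinn w x - rinn u x := rinn_sub_left w u x
  have e3 : rinn u (xw - x) = rinn u xw - rinn u x := rinn_sub_right u xw x
  rw [hrw, hru, e2]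
  rw [e3] at hstr
  rw [e1] at hkey
  linarith

lemma rconj_lower (hp : ProperE φ) (hl : LowerSemicontinuous φ) (hc : Supercoercive φ)
    {x u : Euc d} {px : ℝ} (hx : φ x = (px : EReal)) (hu : u ∈ subdiff φ x) (w : Euc d) :
    rconj φ u + rinn (w - u) x ≤ rconj φ w := by
  have h1 : rinn w x - px ≤ rconj φ w := rconj_ge hp hl hc w x hx
  have hru : rconj φ u = rinn u x - px := rconj_of_subdiff hp hl hc hx hu
  rw [hru, rinn_sub_left]
  linarith

lemma hasGradientAt_rconj (hp : ProperE φ) (hl : LowerSemicontinuous φ) (hc : Supercoercive φ)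
    (hN : IsANorm N) (hσ : 0 < σ) (hsc : StronglyConvexWrt φ σ N)
    {x u : Euc d} {px : ℝ} (hx : φ x = (px : EReal)) (hu : u ∈ subdiff φ x) :
    HasGradientAt (rconj φ) x u := by
  obtain ⟨cd, hcd, hcdle⟩ := dualN_le_const hN
  rw [hasGradientAt_iff_isLittleO]
  rw [Asymptotics.isLittleO_iff]
  intro ε hε
  have hev : ∀ᶠ w in nhds u, ‖w - u‖ ≤ ε * (2 * σ) / (cd ^ 2) := by
    have h : (0:ℝ) < ε * (2 * σ) / (cd ^ 2) := by positivity
    have := Metric.closedBall_mem_nhds u h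
    filter_upwards [this] with w hw
    rw [Metric.mem_closedBall, dist_eq_norm] at hw
    exact hw
  filter_upwards [hev] with w hw
  have hupper : rconj φ w - rconj φ u - rinn (w - u) x ≤ cd ^ 2 * ‖w - u‖ ^ 2 / (2 * σ) := by
    have h1 := rconj_smooth hp hl hc hN hσ hsc hx hu w
    have h2 : (dualN N (w - u)) ^ 2 ≤ (cd * ‖w - u‖) ^ 2 := by
      have := hcdle (w - u)
      have := dualN_nonneg hN (w - u)
      nlinarith
    have h4 : (dualN N (w - u)) ^ 2 / (2 * σ) ≤ (cd * ‖w - u‖) ^ 2 / (2 * σ) := by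
      gcongr
    have h5 : (cd * ‖w - u‖) ^ 2 / (2 * σ) = cd ^ 2 * ‖w - u‖ ^ 2 / (2 * σ) := by ring_nf
    linarith
  have hlower : 0 ≤ rconj φ w - rconj φ u - rinn (w - u) x := by
    have := rconj_lower hp hl hc hx hu w
    linarith
  have habs : |rconj φ w - rconj φ u - rinn (w - u) x| ≤ cd ^ 2 * ‖w - u‖ ^ 2 / (2 * σ) := by
    rw [abs_of_nonneg hlower]; exact hupper
  have hinner : (inner ℝ x (w - u) : ℝ) = rinn (w - u) x := by
    rw [rinn_comm]
    rfl
  simp only [Real.norm_eq_abs]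
  calc |rconj φ w - rconj φ u - inner ℝ x (w - u)| = |rconj φ w - rconj φ u - rinn (w - u) x| := by
        rw [hinner]
  _ ≤ cd ^ 2 * ‖w - u‖ ^ 2 / (2 * σ) := habs
  _ ≤ ε * ‖w - u‖ := by
      rcases eq_or_ne (‖w - u‖) 0 with h0 | h0
      · rw [h0]; simp
      · have hpos : 0 < ‖w - u‖ := lt_of_le_of_ne (norm_nonneg _) (Ne.symm h0)
        have : cd ^ 2 * ‖w - u‖ ^ 2 / (2 * σ) = (cd ^ 2 * ‖w - u‖ / (2 * σ)) * ‖w - u‖ := by ring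
        rw [this]
        apply mul_le_mul_of_nonneg_right _ (norm_nonneg _)
        rw [div_le_iff₀ (by positivity : (0:ℝ) < 2 * σ)] at *
        have : cd ^ 2 * ‖w - u‖ ≤ cd ^ 2 * (ε * (2 * σ) / cd ^ 2) := by
          apply mul_le_mul_of_nonneg_left hw (by positivity)
        calc cd ^ 2 * ‖w - u‖ ≤ cd ^ 2 * (ε * (2 * σ) / cd ^ 2) := this
        _ = ε * (2 * σ) := by field_simp
end smooth

end ConjLemmas
end Statement10Helpers

/-- key descent lemma: one NBK or rNBK step decreases the Bregman distance to
every solution by at least `(σ/2) f_{i_k}(x_k)²/‖∇f_{i_k}(x_k)‖_*²`. -/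
theorem statement10 {d n : ℕ} (φ : Euc d → EReal) (C Dset : Set (Euc d))
    (f : Fin n → Euc d → ℝ) (f' : Fin n → Euc d → Euc d)
    (hφ : PhiAssump φ C) (hf : FAssump f f' Dset C) (hS : (solSet f C).Nonempty)
    (hA2 : Assump2 φ f f')
    (σ : ℝ) (hσ : 0 < σ) (N : Euc d → ℝ) (hN : IsANorm N)
    (hsc : StronglyConvexWrt φ σ N)
    (x u : Euc d) (hu : u ∈ subdiff φ x)
    (i : Fin n) (hf0 : f i x ≠ 0) (hf'0 : f' i x ≠ 0)
    (t : ℝ)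
    (ht : (∀ s : ℝ, lineObj φ f f' i x u t ≤ lineObj φ f f' i x u s) ∨
      t = σ * f i x / (dualN N (f' i x)) ^ 2)
    (u' x' : Euc d) (hu' : u' = u - t • f' i x) (hx' : x' = gradconj φ u') :
    ∀ z ∈ solSet f C,
      breg φ u' x' z ≤
        breg φ u x z - ((σ / 2 * (f i x) ^ 2 / (dualN N (f' i x)) ^ 2 : ℝ) : EReal) := by
  intro z hz
  have hp : ProperE φ := hφ.proper
  have hl : LowerSemicontinuous φ := hφ.lsc
  have hco : Supercoercive φ := hφ.coercive
  have hφxt : φ x ≠ ⊤ := hu.1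
  obtain ⟨px, hpx⟩ : ∃ px : ℝ, φ x = (px : EReal) :=
    ⟨(φ x).toReal, (EReal.coe_toReal hφxt (hp.2 x)).symm⟩
  set G : Euc d := f' i x with hG
  set F : ℝ := f i x with hF
  set dn : ℝ := dualN N G with hdn
  have hdnpos : 0 < dn := dualN_pos hN G hf'0
  have h2σ : (0:ℝ) < 2 * σ := by positivity
  -- the maximizer for u'
  obtain ⟨xs, ps, hxs, hus, heqs⟩ := conj_pack hp hl hco u'
  have hgrad : HasGradientAt (rconj φ) xs u' := hasGradientAt_rconj hp hl hco hN hσ hsc hxs hus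
  have hx'e : x' = xs := by rw [hx', gradconj]; exact hgrad.gradient
  have hrs : rconj φ u' = rinn u' xs - ps := rconj_of_subdiff hp hl hco hxs hus
  have hru : rconj φ u = rinn u x - px := rconj_of_subdiff hp hl hco hpx hu
  set δ : ℝ := rinn G (z - x) + F with hδdef
  have hfz : f i z = 0 := hz.2 i
  have hxC : x ∈ C := by
    rw [← hφ.domC]
    exact subset_closure ⟨u, hu⟩
  have hxD : x ∈ Dset := hf.CsubD hxC
  -- properties of δ
  have hδ0 : δ ≤ 0 ∧ ((∀ y, 0 ≤ f i y) ∨ δ = 0) := by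
    rcases hA2 i with ⟨hnn, hsc2, _⟩ | ⟨hnn, hsc2⟩ | ⟨a, b, hab⟩
    · have hmin : ∀ y, f i z ≤ f i y := fun y => hfz ▸ hnn y
      have h1 := hsc2.2 x z hmin
      rw [hfz] at h1
      constructor
      · rw [hδdef, hG, hF]; linarith
      · exact Or.inl hnn
    · have hmin : ∀ y, f i z ≤ f i y := fun y => hfz ▸ hnn y
      have hxz : x ≠ z := fun h => hf0 (by rw [hF, h, hfz])
      have h1 := hsc2.2 x z hmin hxz
      rw [hfz] at h1
      constructor
      · rw [hδdef, hG, hF]; linarith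
      · exact Or.inl hnn
    · have hgr : HasGradientAt (f i) G x := hG ▸ hf.grad i x hxD
      have hfi : f i = fun y => rinn a y + b := funext hab
      have hgra : HasGradientAt (f i) a x := by
        rw [hfi]
        have h := ((InnerProductSpace.toDual ℝ (Euc d)) a).hasFDerivAt (x := x)
        have h2 := (h.add_const b).hasGradientAt
        simpa [rinn] using h2
      have hGa : G = a := by
        have h1 := hgr.gradient
        have h2 := hgra.gradient
        rw [h1] at h2
        exact h2
      have hδz : δ = 0 := by
        rw [hδdef, hGa, hF]
        have e1 : rinn a (z - x) = rinn a z - rinn a x := rinn_sub_right a z x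
        have e2 : f i x = rinn a x + b := hab x
        have e3 : (0:ℝ) = rinn a z + b := by rw [← hab z, hfz]
        rw [e1, e2]
        linarith
      exact ⟨le_of_eq hδz, Or.inr hδz⟩
  -- smoothness of the line objective
  have hline : ∀ s : ℝ, lineObj φ f f' i x u s ≤ rconj φ u - s * F + s ^ 2 * dn ^ 2 / (2 * σ) := by
    intro s
    have h1 := rconj_smooth hp hl hco hN hσ hsc hpx hu (u - s • G)
    have he : (u - s • G) - u = (-s) • G := by
      rw [neg_smul]; abel
    have h2 : rinn ((u - s • G) - u) x = -(s * rinn G x) := by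
      rw [he, rinn_smul_left]; ring
    have h3 : (dualN N ((u - s • G) - u)) ^ 2 = s ^ 2 * dn ^ 2 := by
      rw [he, dualN_smul hN, abs_neg, mul_pow, sq_abs, hdn]
    rw [h2, h3] at h1
    rw [lineObj, ← hG, ← hF]
    linarith
  -- value at the relaxed step size
  have halg : ∀ s : ℝ, s = σ * F / dn ^ 2 →
      rconj φ u - s * F + s ^ 2 * dn ^ 2 / (2 * σ) = rconj φ u - σ * F ^ 2 / (2 * dn ^ 2) := by
    intro s hs
    rw [hs]
    field_simp
    ring
  have hlt : lineObj φ f f' i x u t ≤ rconj φ u - σ * F ^ 2 / (2 * dn ^ 2) := by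
    rcases ht with hex | hrel
    · calc lineObj φ f f' i x u t ≤ lineObj φ f f' i x u (σ * F / dn ^ 2) := hex _
      _ ≤ rconj φ u - (σ * F / dn ^ 2) * F + (σ * F / dn ^ 2) ^ 2 * dn ^ 2 / (2 * σ) := hline _
      _ = rconj φ u - σ * F ^ 2 / (2 * dn ^ 2) := halg _ rfl
    · calc lineObj φ f f' i x u t ≤ rconj φ u - t * F + t ^ 2 * dn ^ 2 / (2 * σ) := hline t
      _ = rconj φ u - σ * F ^ 2 / (2 * dn ^ 2) := halg t hrel
  -- sign of t * δ
  have htδ : t * δ ≤ 0 := by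
    rcases hδ0.2 with hnn | hzero
    · have hFpos : 0 < F := lt_of_le_of_ne (hnn x) (fun h => hf0 h.symm)
      have ht0 : 0 ≤ t := by
        rcases ht with hexact | hrel
        · have h0 := hexact 0
          have hz0 : lineObj φ f f' i x u 0 = rconj φ u := by
            rw [lineObj]
            simp
          have h1 := rconj_lower hp hl hco hpx hu (u - t • G)
          have he : (u - t • G) - u = (-t) • G := by
            rw [neg_smul]; abel
          have h2 : rinn ((u - t • G) - u) x = -(t * rinn G x) := by
            rw [he, rinn_smul_left]; ring
          rw [h2] at h1
          have h3 : lineObj φ f f' i x u t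
              = rconj φ (u - t • G) + t * (rinn G x - F) := by
            rw [lineObj, ← hG, ← hF]
          have h4 : 0 ≤ t * F := by
            rw [hz0] at h0
            rw [h3] at h0
            nlinarith
          exact (mul_nonneg_iff_of_pos_right hFpos).1 h4
        · rw [hrel]
          apply div_nonneg (mul_nonneg hσ.le hFpos.le) (sq_nonneg dn)
      exact mul_nonpos_iff.2 (Or.inl ⟨ht0, hδ0.1⟩)
    · rw [hzero, mul_zero]
  -- final EReal comparison
  rcases eq_or_ne (φ z) ⊤ with hzt | hzt
  · have hR : breg φ u x z - ((σ / 2 * F ^ 2 / dn ^ 2 : ℝ) : EReal) = ⊤ := by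
      rw [breg, hzt, hpx, EReal.top_sub_coe, EReal.top_sub_coe, EReal.top_sub_coe]
    rw [hR]
    exact le_top
  · obtain ⟨pz, hpz⟩ : ∃ pz : ℝ, φ z = (pz : EReal) :=
      ⟨(φ z).toReal, (EReal.coe_toReal hzt (hp.2 z)).symm⟩
    have hL : breg φ u' x' z = ((pz - ps - rinn u' (z - xs) : ℝ) : EReal) := by
      rw [breg, hx'e, hxs, hpz, ← EReal.coe_sub, ← EReal.coe_sub]
    have hR : breg φ u x z - ((σ / 2 * F ^ 2 / dn ^ 2 : ℝ) : EReal)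
        = ((pz - px - rinn u (z - x) - σ / 2 * F ^ 2 / dn ^ 2 : ℝ) : EReal) := by
      rw [breg, hpz, hpx, ← EReal.coe_sub, ← EReal.coe_sub, ← EReal.coe_sub]
    rw [hL, hR, EReal.coe_le_coe_iff]
    have e1 : rinn u' (z - xs) = rinn u' z - rinn u' xs := rinn_sub_right _ _ _
    have e2 : rinn u' z = rinn u z - t * rinn G z := by
      rw [hu', rinn_sub_left, rinn_smul_left]
    have e3 : rinn u (z - x) = rinn u z - rinn u x := rinn_sub_right _ _ _
    have e4 : rinn G (z - x) = rinn G z - rinn G x := rinn_sub_right _ _ _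
    have e5 : lineObj φ f f' i x u t = rconj φ u' + t * (rinn G x - F) := by
      rw [lineObj, ← hG, ← hF, ← hu']
    have e5' : rconj φ u' = lineObj φ f f' i x u t - t * rinn G x + t * F := by
      rw [e5]; ring
    have e6 : σ * F ^ 2 / (2 * dn ^ 2) = σ / 2 * F ^ 2 / dn ^ 2 := by
      ring
    have e7 : t * rinn G (z - x) = t * rinn G z - t * rinn G x := by
      rw [e4]; ring
    have e8 : t * δ = t * rinn G (z - x) + t * F := by
      rw [hδdef]; ring
    linarith
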